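/- The map ζ is an algebra morphism from A ⊗ H to H ⊗ A (both with the tensor-product algebra structure): for all a, a' ∈ A and h, h' ∈ H, ζ((a ⊗ h)·(a' ⊗ h')) = ζ(a ⊗ h)·ζ(a' ⊗ h'), and ζ(1_A ⊗ 1_H) = 1_H ⊗ 1_A. -/

import Mathlib

open TensorProduct

noncomputable section

universe u

variable {k A H X : Type u} [Field k]
  [Ring A] [Ring H] [Ring X]
  [Bialgebra k A] [Bialgebra k H] [Bialgebra k X]

/-- ζ := (p_H ⊗ p_A) ∘ Δ_X ∘ ξ⁻¹ : A ⊗ H → H ⊗ A. -/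
def zetaC (pA : X →ₐc[k] A) (pH : X →ₐc[k] H) (ξ : X ≃ₗ[k] A ⊗[k] H) :
    A ⊗[k] H →ₗ[k] H ⊗[k] A :=
  TensorProduct.map (pH : X →ₗ[k] H) (pA : X →ₗ[k] A) ∘ₗ
    (Coalgebra.comul : X →ₗ[k] X ⊗[k] X) ∘ₗ ξ.symm.toLinearMap

/-- The map x ↦ Σ pU(x₁) ⊗ pV(x₂) as an algebra hom. -/
def xiAlg {U V : Type u} [Ring U] [Ring V] [Bialgebra k U] [Bialgebra k V]
    (pU : X →ₐc[k] U) (pV : X →ₐc[k] V) : X →ₐ[k] U ⊗[k] V :=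
  (Algebra.TensorProduct.map (pU : X →ₐ[k] U) (pV : X →ₐ[k] V)).comp
    (Bialgebra.comulAlgHom k X)

lemma xiAlg_apply {U V : Type u} [Ring U] [Ring V] [Bialgebra k U] [Bialgebra k V]
    (pU : X →ₐc[k] U) (pV : X →ₐc[k] V) (x : X) :
    xiAlg pU pV x =
      TensorProduct.map (pU : X →ₗ[k] U) (pV : X →ₗ[k] V) (Coalgebra.comul x) := by
  have : (Algebra.TensorProduct.map (pU : X →ₐ[k] U) (pV : X →ₐ[k] V)).toLinearMap
      = TensorProduct.map (pU : X →ₗ[k] U) (pV : X →ₗ[k] V) := by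
    ext u v
    simp
  rw [← this]
  rfl

/-- ζ is an algebra morphism from A ⊗ H to H ⊗ A (both with the
tensor-product algebra structure). -/
theorem zetaC_algebra_morphism (pA : X →ₐc[k] A) (pH : X →ₐc[k] H)
    (ξ : X ≃ₗ[k] A ⊗[k] H)
    (hξ : ∀ x : X, ξ x = TensorProduct.map (pA : X →ₗ[k] A) (pH : X →ₗ[k] H)
      (Coalgebra.comul x)) :
    (∀ (a a' : A) (h h' : H),
      zetaC pA pH ξ ((a ⊗ₜ[k] h) * (a' ⊗ₜ[k] h'))
        = zetaC pA pH ξ (a ⊗ₜ[k] h) * zetaC pA pH ξ (a' ⊗ₜ[k] h')) ∧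
    zetaC pA pH ξ ((1 : A) ⊗ₜ[k] (1 : H)) = (1 : H) ⊗ₜ[k] (1 : A) := by
  have hξ' : ∀ x : X, ξ x = xiAlg pA pH x := fun x => by rw [hξ x, xiAlg_apply]
  have hzeta : ∀ u : A ⊗[k] H, zetaC pA pH ξ u = xiAlg pH pA (ξ.symm u) := by
    intro u
    rw [xiAlg_apply]
    rfl
  have hsymm_mul : ∀ u v : A ⊗[k] H, ξ.symm (u * v) = ξ.symm u * ξ.symm v := by
    intro u v
    apply ξ.injective
    rw [ξ.apply_symm_apply, hξ', map_mul, ← hξ', ← hξ', ξ.apply_symm_apply,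
      ξ.apply_symm_apply]
  have hsymm_one : ξ.symm 1 = 1 := by
    apply ξ.injective
    rw [ξ.apply_symm_apply, hξ', map_one]
  constructor
  · intro a a' h h'
    rw [hzeta, hzeta, hzeta, hsymm_mul, map_mul]
  · have : ((1 : A) ⊗ₜ[k] (1 : H)) = (1 : A ⊗[k] H) := rfl
    rw [this, hzeta, hsymm_one, map_one]
    rfl
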